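/- Let U and V be finite sets, let f : 2^V → [0,1] be a set function, and for each v ∈ V let g_v : 2^U → [0,1] be a set function. Define the compound set function h : 2^U → ℝ by h(S) = ∑_{T ⊆ V} ∏_{v ∈ T} g_v(S) · ∏_{v ∈ V \ T} (1 − g_v(S)) · f(T). If f is AD-k and g_v is AD-k for every v ∈ V, then h is AD-k. -/

import Mathlib

open MeasureTheory Finset
open scoped Classical

noncomputable section


/-- The difference of a set function `f` over a set `A`, evaluated at `S`:
`Δ_A f(S) = ∑_{B ⊆ A} (-1)^{|B|} f(S ∪ (A \ B))`. -/
def adDiff {V : Type*} [DecidableEq V] (f : Finset V → ℝ) (A S : Finset V) : ℝ :=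
  ∑ B ∈ A.powerset, (-1 : ℝ) ^ B.card * f (S ∪ (A \ B))

/-- A set function `f : 2^V → ℝ` is AD-`k` if `(-1)^{|A|+1} Δ_A f(S) ≥ 0` for every
nonempty `A` with `|A| ≤ k` and every `S`. -/
def IsADk {V : Type*} [DecidableEq V] (f : Finset V → ℝ) (k : ℕ) : Prop :=
  ∀ A S : Finset V, A.Nonempty → A.card ≤ k →
    0 ≤ (-1 : ℝ) ^ (A.card + 1) * adDiff f A S


variable {U : Type*} [DecidableEq U]

lemma adDiff_empty (f : Finset U → ℝ) (S : Finset U) : adDiff f ∅ S = f S := by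
  simp [adDiff]

lemma adDiff_congr {f g : Finset U → ℝ} (h : ∀ S, f S = g S) (A S : Finset U) :
    adDiff f A S = adDiff g A S := by
  unfold adDiff; exact Finset.sum_congr rfl fun B _ => by rw [h]

lemma adDiff_insert {f : Finset U → ℝ} {a : U} {A : Finset U} (ha : a ∉ A) (S : Finset U) :
    adDiff f (insert a A) S = adDiff (fun S' => f (insert a S') - f S') A S := by
  unfold adDiff
  rw [Finset.sum_powerset_insert ha]
  have h1 : ∀ B ∈ A.powerset, (-1:ℝ) ^ B.card * f (S ∪ (insert a A \ B))
      = (-1:ℝ) ^ B.card * f (insert a (S ∪ (A \ B))) := by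
    intro B hB
    rw [Finset.mem_powerset] at hB
    have haB : a ∉ B := fun h => ha (hB h)
    rw [Finset.insert_sdiff_of_notMem _ haB, Finset.union_insert]
  have h2 : ∀ B ∈ A.powerset, (-1:ℝ) ^ (insert a B).card * f (S ∪ (insert a A \ insert a B))
      = -((-1:ℝ) ^ B.card * f (S ∪ (A \ B))) := by
    intro B hB
    rw [Finset.mem_powerset] at hB
    have haB : a ∉ B := fun h => ha (hB h)
    have hc : (insert a B).card = B.card + 1 := Finset.card_insert_of_notMem haB
    have hs : insert a A \ insert a B = A \ B := by
      ext x
      simp only [Finset.mem_sdiff, Finset.mem_insert]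
      constructor
      · rintro ⟨hx1 | hx1, hx2⟩
        · exact absurd (Or.inl hx1) hx2
        · exact ⟨hx1, fun hxB => hx2 (Or.inr hxB)⟩
      · rintro ⟨hx1, hx2⟩
        refine ⟨Or.inr hx1, ?_⟩
        rintro (rfl | hxB)
        · exact ha hx1
        · exact hx2 hxB
    rw [hc, hs, pow_succ]
    ring
  rw [Finset.sum_congr rfl h1, Finset.sum_congr rfl h2, ← Finset.sum_add_distrib]
  exact Finset.sum_congr rfl fun B _ => by ring

end

noncomputable section
variable {U : Type*} [DecidableEq U]

lemma adDiff_shift {f : Finset U → ℝ} {a : U} {A : Finset U} (ha : a ∉ A) (S : Finset U) :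
    adDiff (fun S' => f (insert a S')) A S = adDiff f A (insert a S) := by
  unfold adDiff
  refine Finset.sum_congr rfl fun B _ => ?_
  rw [Finset.insert_union]

lemma adDiff_add (f g : Finset U → ℝ) (A S : Finset U) :
    adDiff (fun S' => f S' + g S') A S = adDiff f A S + adDiff g A S := by
  unfold adDiff
  rw [← Finset.sum_add_distrib]
  exact Finset.sum_congr rfl fun B _ => by ring

lemma adDiff_sub (f g : Finset U → ℝ) (A S : Finset U) :
    adDiff (fun S' => f S' - g S') A S = adDiff f A S - adDiff g A S := by
  unfold adDiff
  rw [← Finset.sum_sub_distrib]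
  exact Finset.sum_congr rfl fun B _ => by ring

lemma adDiff_shift_mem {f : Finset U → ℝ} {a : U} {A : Finset U} (ha : a ∈ A) (S : Finset U) :
    adDiff (fun S' => f (insert a S')) A S = 0 := by
  obtain ⟨A', haA', rfl⟩ : ∃ A', a ∉ A' ∧ A = insert a A' :=
    ⟨A.erase a, A.notMem_erase a, (Finset.insert_erase ha).symm⟩
  rw [adDiff_insert haA']
  have : ∀ S', (fun S' => f (insert a S')) (insert a S') - (fun S' => f (insert a S')) S' = 0 := by
    intro S'; simp [Finset.insert_idem]
  calc adDiff (fun S' => (fun S'' => f (insert a S'')) (insert a S') - (fun S'' => f (insert a S'')) S') A' S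
      = adDiff (fun _ => (0:ℝ)) A' S := adDiff_congr this A' S
    _ = 0 := by unfold adDiff; simp

lemma IsADk_shift {γ : Finset U → ℝ} {k : ℕ} (h : IsADk γ k) (a : U) :
    IsADk (fun S => γ (insert a S)) k := by
  intro A S hA hAk
  by_cases ha : a ∈ A
  · rw [adDiff_shift_mem ha]; simp
  · rw [adDiff_shift ha]; exact h A (insert a S) hA hAk

lemma adDiff_mul (P Q : Finset U → ℝ) (C : Finset U) (S : Finset U) :
    adDiff (fun S' => P S' * Q S') C S
      = ∑ B ∈ C.powerset, adDiff Q B (S ∪ (C \ B)) * adDiff P (C \ B) S := by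
  induction C using Finset.induction_on generalizing P Q S with
  | empty => simp [adDiff_empty, mul_comm]
  | insert _ _ hc =>
    rename_i c C ih
    rw [adDiff_insert hc]
    have key : ∀ S', (fun S' => P S' * Q S') (insert c S') - (fun S' => P S' * Q S') S'
        = (P (insert c S') - P S') * Q (insert c S')
          + P S' * (Q (insert c S') - Q S') := by intro S'; ring
    rw [adDiff_congr key, adDiff_add]
    rw [ih ((fun S' => P (insert c S') - P S')) (fun S' => Q (insert c S')) S,
        ih P (fun S' => Q (insert c S') - Q S') S]
    rw [Finset.sum_powerset_insert hc]
    congr 1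
    · -- part matching B not containing c : (dP) * (Q ∘ insert c)
      refine Finset.sum_congr rfl fun B hB => ?_
      rw [Finset.mem_powerset] at hB
      have hcB : c ∉ B := fun h => hc (hB h)
      have h1 : insert c C \ B = insert c (C \ B) := Finset.insert_sdiff_of_notMem _ hcB
      have h2 : c ∉ C \ B := fun h => hc (Finset.mem_sdiff.mp h).1
      rw [h1, Finset.union_insert, adDiff_shift hcB, ← adDiff_insert h2]
    · -- part matching B containing c
      refine Finset.sum_congr rfl fun B hB => ?_
      rw [Finset.mem_powerset] at hB
      have hcB : c ∉ B := fun h => hc (hB h)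
      have h1 : insert c C \ insert c B = C \ B := by
        ext x
        simp only [Finset.mem_sdiff, Finset.mem_insert]
        constructor
        · rintro ⟨hx1 | hx1, hx2⟩
          · exact absurd (Or.inl hx1) hx2
          · exact ⟨hx1, fun hxB => hx2 (Or.inr hxB)⟩
        · rintro ⟨hx1, hx2⟩
          exact ⟨Or.inr hx1, by rintro (rfl | hxB); exacts [hc hx1, hx2 hxB]⟩
      rw [h1, ← adDiff_insert hcB]

lemma adDiff_insert_base {f : Finset U → ℝ} {v : U} {W : Finset U} (hv : v ∉ W) (T : Finset U) :
    adDiff f (insert v W) T = adDiff f W (insert v T) - adDiff f W T := by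
  rw [adDiff_insert hv, adDiff_sub, adDiff_shift hv]

end

noncomputable section
variable {U V : Type*} [DecidableEq U] [Fintype V] [DecidableEq V]

def Phi (f : Finset V → ℝ) (γ : V → Finset U → ℝ) (W : Finset V) (S : Finset U) : ℝ :=
  ∑ T ∈ ((Finset.univ : Finset V) \ W).powerset,
    (∏ v ∈ T, γ v S) * (∏ v ∈ ((Finset.univ : Finset V) \ W) \ T, (1 - γ v S)) * adDiff f W T

lemma Phi_congr {f : Finset V → ℝ} {γ₁ γ₂ : V → Finset U → ℝ} (W : Finset V)
    (h : ∀ v ∈ (Finset.univ : Finset V) \ W, γ₁ v = γ₂ v) (S : Finset U) :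
    Phi f γ₁ W S = Phi f γ₂ W S := by
  unfold Phi
  refine Finset.sum_congr rfl fun T hT => ?_
  rw [Finset.mem_powerset] at hT
  congr 1
  congr 1
  · exact Finset.prod_congr rfl fun v hv => by rw [h v (hT hv)]
  · exact Finset.prod_congr rfl fun v hv => by rw [h v (Finset.mem_sdiff.mp hv).1]

lemma Phi_update {f : Finset V → ℝ} (γ₁ γ₂ : V → Finset U → ℝ) {W : Finset V} {v : V}
    (hv : v ∉ W) (hagree : ∀ u, u ≠ v → γ₁ u = γ₂ u) (S : Finset U) :
    Phi f γ₂ W S - Phi f γ₁ W S = (γ₂ v S - γ₁ v S) * Phi f γ₁ (insert v W) S := by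
  have hvV : v ∈ (Finset.univ : Finset V) \ W := Finset.mem_sdiff.mpr ⟨Finset.mem_univ v, hv⟩
  set V' := (Finset.univ : Finset V) \ W with hV'
  have hve : v ∉ V'.erase v := Finset.notMem_erase v V'
  have hins : insert v (V'.erase v) = V' := Finset.insert_erase hvV
  have hsd : (Finset.univ : Finset V) \ insert v W = V'.erase v := by
    ext x
    simp only [Finset.mem_sdiff, Finset.mem_insert, Finset.mem_erase, Finset.mem_univ, true_and, hV']
    tauto
  -- expand both Phi's over V' = insert v (V'.erase v)
  have expand : ∀ γ : V → Finset U → ℝ, Phi f γ W S =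
      ∑ T ∈ (V'.erase v).powerset,
        ((∏ u ∈ T, γ u S) * (∏ u ∈ V' \ T, (1 - γ u S)) * adDiff f W T
          + (∏ u ∈ insert v T, γ u S) * (∏ u ∈ V' \ insert v T, (1 - γ u S)) * adDiff f W (insert v T)) := by
    intro γ
    rw [Phi, ← hV', ← hins, Finset.sum_powerset_insert hve, hins, Finset.sum_add_distrib]
  rw [expand γ₁, expand γ₂, ← Finset.sum_sub_distrib]
  rw [Phi, hsd, Finset.mul_sum]
  refine Finset.sum_congr rfl fun T hT => ?_
  rw [Finset.mem_powerset] at hT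
  have hvT : v ∉ T := fun h => hve (hT h)
  have hvVT : v ∈ V' \ T := Finset.mem_sdiff.mpr ⟨hvV, hvT⟩
  -- products agree between γ₁, γ₂ off v
  have hprod : ∀ (X : Finset V), v ∉ X → ∀ φ : ℝ → ℝ, (∏ u ∈ X, φ (γ₂ u S)) = ∏ u ∈ X, φ (γ₁ u S) := by
    intro X hX φ
    exact Finset.prod_congr rfl fun u hu => by rw [hagree u (fun h => hX (h ▸ hu))]
  have hP : (∏ u ∈ T, γ₂ u S) = ∏ u ∈ T, γ₁ u S := hprod T hvT id
  have h1 : V' \ insert v T = (V' \ T).erase v := by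
    ext x
    simp only [Finset.mem_sdiff, Finset.mem_insert, Finset.mem_erase]
    tauto
  have h2 : (V' \ T).erase v = (V'.erase v) \ T := by
    ext x
    simp only [Finset.mem_sdiff, Finset.mem_erase]
    tauto
  have hQ : (∏ u ∈ (V'.erase v) \ T, (1 - γ₂ u S)) = ∏ u ∈ (V'.erase v) \ T, (1 - γ₁ u S) := by
    refine Finset.prod_congr rfl fun u hu => ?_
    have huv : u ≠ v := by
      rintro rfl
      exact hve (Finset.mem_sdiff.mp hu).1
    rw [hagree u huv]
  -- split the (1-γ) product over V'\T by pulling out v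
  have hpull : ∀ γ : V → Finset U → ℝ, (∏ u ∈ V' \ T, (1 - γ u S))
      = (1 - γ v S) * ∏ u ∈ (V'.erase v) \ T, (1 - γ u S) := by
    intro γ
    rw [← Finset.mul_prod_erase _ _ hvVT, h2]
  have hins2 : ∀ γ : V → Finset U → ℝ, (∏ u ∈ insert v T, γ u S) = γ v S * ∏ u ∈ T, γ u S :=
    fun γ => Finset.prod_insert hvT
  have hD : adDiff f (insert v W) T = adDiff f W (insert v T) - adDiff f W T :=
    adDiff_insert_base hv T
  rw [hins2 γ₁, hins2 γ₂, hpull γ₁, hpull γ₂, h1, h2, hP, hQ, hD]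
  ring

end

noncomputable section
variable {U V : Type*} [DecidableEq U] [Fintype V] [DecidableEq V]

lemma adDiff_zero (A S : Finset U) : adDiff (fun _ => (0:ℝ)) A S = 0 := by
  simp [adDiff]

lemma neg_one_pow_mod (n : ℕ) : (-1:ℝ)^n = (-1)^(n % 2) := by
  conv_lhs => rw [← Nat.div_add_mod n 2]
  rw [pow_add, pow_mul]
  simp

lemma main_lemma {k : ℕ} {f : Finset V → ℝ} (hf : IsADk f k) (A : Finset U) :
    ∀ (γ : V → Finset U → ℝ),
      (∀ v S, 0 ≤ γ v S) → (∀ v S, γ v S ≤ 1) → (∀ v, IsADk (γ v) k) →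
      ∀ (W : Finset V) (S : Finset U), 1 ≤ A.card + W.card → A.card + W.card ≤ k →
      0 ≤ (-1 : ℝ) ^ (A.card + W.card + 1) * adDiff (Phi f γ W) A S := by
  induction A using Finset.strongInduction with
  | _ A ih =>
  intro γ hγ0 hγ1 hγk W S h1 h2
  rcases Finset.eq_empty_or_nonempty A with rfl | ⟨a, ha⟩
  · -- base case A = ∅
    simp only [Finset.card_empty, zero_add] at h1 h2 ⊢
    rw [adDiff_empty]
    have hW : W.Nonempty := Finset.card_pos.mp h1
    rw [Phi, Finset.mul_sum]
    refine Finset.sum_nonneg fun T hT => ?_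
    have c1 : 0 ≤ ∏ v ∈ T, γ v S := Finset.prod_nonneg fun v _ => hγ0 v S
    have c2 : 0 ≤ ∏ v ∈ ((Finset.univ : Finset V) \ W) \ T, (1 - γ v S) :=
      Finset.prod_nonneg fun v _ => by linarith [hγ1 v S]
    have hfT := hf W T hW h2
    calc (0:ℝ) ≤ ((∏ v ∈ T, γ v S) * (∏ v ∈ ((Finset.univ : Finset V) \ W) \ T, (1 - γ v S)))
          * ((-1)^(W.card+1) * adDiff f W T) := mul_nonneg (mul_nonneg c1 c2) hfT
      _ = (-1)^(W.card+1) * ((∏ v ∈ T, γ v S)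
          * (∏ v ∈ ((Finset.univ : Finset V) \ W) \ T, (1 - γ v S)) * adDiff f W T) := by ring
  · -- inductive step
    set A' := A.erase a with hA'
    have haA' : a ∉ A' := Finset.notMem_erase a A
    have hA : A = insert a A' := (Finset.insert_erase ha).symm
    have hAA' : A' ⊂ A := Finset.erase_ssubset ha
    have hcard : A.card = A'.card + 1 := by rw [hA, Finset.card_insert_of_notMem haA']
    -- the updated family
    set upd : Finset V → V → Finset U → ℝ :=
      fun R v => if v ∈ R then (fun S'' => γ v (insert a S'')) else γ v with hupd
    have hupd0 : ∀ R v S', 0 ≤ upd R v S' := by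
      intro R v S'
      by_cases h : v ∈ R <;> simp only [hupd, h, if_true, if_false] <;> apply hγ0
    have hupd1 : ∀ R v S', upd R v S' ≤ 1 := by
      intro R v S'
      by_cases h : v ∈ R <;> simp only [hupd, h, if_true, if_false] <;> apply hγ1
    have hupdk : ∀ R v, IsADk (upd R v) k := by
      intro R v
      by_cases h : v ∈ R <;> simp only [hupd, h, if_true, if_false]
      · exact IsADk_shift (hγk v) a
      · exact hγk v
    have claim : ∀ R : Finset V, R ⊆ (Finset.univ : Finset V) \ W →
        0 ≤ (-1:ℝ)^(A.card + W.card + 1)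
          * adDiff (fun S' => Phi f (upd R) W S' - Phi f γ W S') A' S := by
      intro R
      induction R using Finset.induction_on with
      | empty =>
        intro _
        have hz : ∀ S', Phi f (upd ∅) W S' - Phi f γ W S' = 0 := by
          intro S'
          have : Phi f (upd ∅) W S' = Phi f γ W S' :=
            Phi_congr W (fun v _ => if_neg (Finset.notMem_empty v)) S'
          rw [this, sub_self]
        rw [adDiff_congr hz, adDiff_zero, mul_zero]
      | insert _ _ hvR =>
        rename_i v R ihR
        intro hsub
        have hvV' : v ∈ (Finset.univ : Finset V) \ W := hsub (Finset.mem_insert_self v R)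
        have hvW : v ∉ W := (Finset.mem_sdiff.mp hvV').2
        have hRsub : R ⊆ (Finset.univ : Finset V) \ W :=
          fun x hx => hsub (Finset.mem_insert_of_mem hx)
        have hsplit : ∀ S', Phi f (upd (insert v R)) W S' - Phi f γ W S'
            = (Phi f (upd (insert v R)) W S' - Phi f (upd R) W S')
              + (Phi f (upd R) W S' - Phi f γ W S') := fun S' => by ring
        rw [adDiff_congr hsplit, adDiff_add, mul_add]
        refine add_nonneg ?_ (ihR hRsub)
        -- first difference via Phi_update
        have hagree : ∀ u, u ≠ v → upd R u = upd (insert v R) u := by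
          intro u hu
          simp only [hupd, Finset.mem_insert, hu, false_or]
        have hupdate : ∀ S', Phi f (upd (insert v R)) W S' - Phi f (upd R) W S'
            = (γ v (insert a S') - γ v S') * Phi f (upd R) (insert v W) S' := by
          intro S'
          rw [Phi_update (upd R) (upd (insert v R)) hvW hagree S']
          have e1 : upd (insert v R) v S' = γ v (insert a S') := by
            simp only [hupd, Finset.mem_insert_self, if_true]
          have e2 : upd R v S' = γ v S' := by
            simp only [hupd, hvR, if_false]
          rw [e1, e2]
        rw [adDiff_congr hupdate,
          adDiff_mul (fun S' => γ v (insert a S') - γ v S') (Phi f (upd R) (insert v W)) A' S,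
          Finset.mul_sum]
        refine Finset.sum_nonneg fun B hB => ?_
        rw [Finset.mem_powerset] at hB
        have hBA : B ⊂ A := lt_of_le_of_lt hB hAA'
        have haB : a ∉ A' \ B := fun h => haA' (Finset.mem_sdiff.mp h).1
        -- the Q factor
        have hcardvW : (insert v W).card = W.card + 1 := Finset.card_insert_of_notMem hvW
        have hQ : 0 ≤ (-1:ℝ)^(B.card + (W.card + 1) + 1)
            * adDiff (Phi f (upd R) (insert v W)) B (S ∪ (A' \ B)) := by
          have := ih B hBA (upd R) (hupd0 R) (hupd1 R) (hupdk R) (insert v W) (S ∪ (A' \ B))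
            (by omega) (by rw [hcardvW]; have := Finset.card_le_card hB; omega)
          rwa [hcardvW] at this
        -- the P factor
        have hP : 0 ≤ (-1:ℝ)^((A' \ B).card + 1 + 1)
            * adDiff (fun S' => γ v (insert a S') - γ v S') (A' \ B) S := by
          have := hγk v (insert a (A' \ B)) S (Finset.insert_nonempty a _)
            (by rw [Finset.card_insert_of_notMem haB]
                have h1 := Finset.card_sdiff_of_subset hB
                have h2 := Finset.card_le_card hB
                omega)
          rwa [Finset.card_insert_of_notMem haB, adDiff_insert haB] at this
        have hprod := mul_nonneg hQ hP
        have hsign : ((-1:ℝ)^(B.card + (W.card + 1) + 1)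
              * adDiff (Phi f (upd R) (insert v W)) B (S ∪ (A' \ B)))
            * ((-1:ℝ)^((A' \ B).card + 1 + 1)
              * adDiff (fun S' => γ v (insert a S') - γ v S') (A' \ B) S)
            = (-1:ℝ)^(A.card + W.card + 1)
              * (adDiff (Phi f (upd R) (insert v W)) B (S ∪ (A' \ B))
                * adDiff (fun S' => γ v (insert a S') - γ v S') (A' \ B) S) := by
          rw [show ((-1:ℝ)^(B.card + (W.card + 1) + 1)) * adDiff (Phi f (upd R) (insert v W)) B (S ∪ (A' \ B))
              * ((-1:ℝ)^((A' \ B).card + 1 + 1) * adDiff (fun S' => γ v (insert a S') - γ v S') (A' \ B) S)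
              = ((-1:ℝ)^(B.card + (W.card + 1) + 1) * (-1:ℝ)^((A' \ B).card + 1 + 1))
                * (adDiff (Phi f (upd R) (insert v W)) B (S ∪ (A' \ B))
                  * adDiff (fun S' => γ v (insert a S') - γ v S') (A' \ B) S) from by ring]
          congr 1
          rw [← pow_add, neg_one_pow_mod, neg_one_pow_mod (A.card + W.card + 1)]
          congr 1
          have h1 := Finset.card_sdiff_of_subset hB
          have h2 := Finset.card_le_card hB
          omega
        rw [← hsign]
        exact hprod
    -- assemble
    have hrw : adDiff (Phi f γ W) A S
        = adDiff (fun S' => Phi f (upd ((Finset.univ : Finset V) \ W)) W S' - Phi f γ W S') A' S := by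
      conv_lhs => rw [hA, adDiff_insert haA']
      refine adDiff_congr (fun S' => ?_) A' S
      have : Phi f (upd ((Finset.univ : Finset V) \ W)) W S' = Phi f γ W (insert a S') := by
        have heq : Phi f (upd ((Finset.univ : Finset V) \ W)) W S'
            = Phi f (fun v => fun S'' => γ v (insert a S'')) W S' :=
          Phi_congr W (fun v hv => if_pos hv) S'
        rw [heq]; rfl
      rw [this]
    rw [hrw]
    exact claim _ (le_refl _)

end

/-- If `f : 2^V → [0,1]` is AD-`k` and each `g_v : 2^U → [0,1]` is AD-`k`, then the
compound set function
`h(S) = ∑_{T ⊆ V} ∏_{v ∈ T} g_v(S) ∏_{v ∈ V \ T} (1 - g_v(S)) f(T)` is AD-`k`. -/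

theorem compound_set_function_ADk
    {U V : Type*} [Fintype U] [DecidableEq U] [Fintype V] [DecidableEq V]
    (f : Finset V → ℝ) (hf0 : ∀ T, 0 ≤ f T) (hf1 : ∀ T, f T ≤ 1)
    (g : V → Finset U → ℝ) (hg0 : ∀ v S, 0 ≤ g v S) (hg1 : ∀ v S, g v S ≤ 1)
    (k : ℕ) (hf : IsADk f k) (hg : ∀ v, IsADk (g v) k) :
    IsADk (fun S : Finset U =>
      ∑ T ∈ (Finset.univ : Finset V).powerset,
        (∏ v ∈ T, g v S) * (∏ v ∈ Finset.univ \ T, (1 - g v S)) * f T) k := by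
  intro A S hA hAk
  have heq : (fun S : Finset U =>
      ∑ T ∈ (Finset.univ : Finset V).powerset,
        (∏ v ∈ T, g v S) * (∏ v ∈ Finset.univ \ T, (1 - g v S)) * f T)
      = Phi f g (∅ : Finset V) := by
    funext S'
    unfold Phi
    rw [Finset.sdiff_empty]
    refine Finset.sum_congr rfl fun T hT => ?_
    rw [adDiff_empty]
  rw [heq]
  have hmain := main_lemma hf A g hg0 hg1 hg ∅ S
    (by simpa using hA.card_pos) (by simpa using hAk)
  simpa using hmain
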